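/- Let (𝔞,ω_𝔞) be a periplectic quasi-Frobenius Lie superalgebra over 𝕂, let D be an odd derivation of 𝔞 with adjoint D*, and suppose there exists an even element a₀ ∈ 𝔞 such that D∘D = ad_{a₀} (i.e. D(D(a)) = [a₀,a]_𝔞 for all a), D(a₀) = D*(a₀) = 0, and ω_𝔞((D∘D − D*∘D*)(a), b) = ω_𝔞(a₀, [a,b]_𝔞) for all a,b ∈ 𝔞. Then on 𝔤 = 𝕂x ⊕ 𝔞 ⊕ 𝕂e, with x even and e odd, the brackets [x,y]_𝔤 = 0 for all y ∈ 𝔤, [a,b]_𝔤 = [a,b]_𝔞 + (ω_𝔞(D(a),b) + (−1)^{p(a)}ω_𝔞(a,D(b)))·x, [e,e]_𝔤 = 2a₀, and [e,a]_𝔤 = D(a) + ω_𝔞(a₀,a)·x for a,b ∈ 𝔞, define a Lie superalgebra structure; moreover the odd bilinear form ω_𝔤 determined by ω_𝔤|_{𝔞×𝔞} = ω_𝔞, ω_𝔤(𝔞,x) = ω_𝔤(𝔞,e) = 0, ω_𝔤(e,x) = 1, and ω_𝔤(x,x) = ω_𝔤(e,e) = 0 is a closed anti-symmetric non-degenerate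 form, so (𝔤,ω_𝔤) is a periplectic quasi-Frobenius Lie superalgebra. -/

import Mathlib

noncomputable section

/-- The sign `(−1)^{ij}` for parities `i, j` encoded as booleans
(`false` = even, `true` = odd). -/
def ssign (K : Type*) [Field K] (i j : Bool) : K := if i && j then -1 else 1

section Defs

variable (K : Type*) [Field K]

/-- A map `f : V → V → W` is bilinear over `K`. -/
def IsBilinMap (V W : Type*) [AddCommGroup V] [Module K V] [AddCommGroup W] [Module K W]
    (f : V → V → W) : Prop :=
  (∀ x y z : V, f (x + y) z = f x z + f y z) ∧
  (∀ (c : K) (x y : V), f (c • x) y = c • f x y) ∧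
  (∀ x y z : V, f x (y + z) = f x y + f x z) ∧
  (∀ (c : K) (x y : V), f x (c • y) = c • f x y)

variable (V : Type*) [AddCommGroup V] [Module K V]

/-- A Lie superalgebra structure over `K` on the `ℤ/2`-graded space `V`,
with homogeneous components `sub false` (even part) and `sub true` (odd part),
and bracket `br`.  Includes super anti-commutativity, the super Jacobi identity,
and (when `char K = 3`) the extra cubic condition on odd elements. -/
structure IsLieSuperAlg (sub : Bool → Submodule K V) (br : V → V → V) : Prop where
  compl : IsCompl (sub false) (sub true)
  bilin : IsBilinMap K V V br
  graded : ∀ i j : Bool, ∀ x ∈ sub i, ∀ y ∈ sub j, br x y ∈ sub (Bool.xor i j)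
  antisymm : ∀ i j : Bool, ∀ x ∈ sub i, ∀ y ∈ sub j, br y x = -(ssign K i j • br x y)
  jacobi : ∀ i j k : Bool, ∀ x ∈ sub i, ∀ y ∈ sub j, ∀ z ∈ sub k,
    ssign K i k • br x (br y z) + ssign K j i • br y (br z x) + ssign K k j • br z (br x y) = 0
  jacobi3 : ringChar K = 3 → ∀ f ∈ sub true, br f (br f f) = 0

/-- Graded anti-symmetry of a bilinear form: `ω(y,x) = -(-1)^{p(x)p(y)} ω(x,y)`. -/
def IsSuperSkew (sub : Bool → Submodule K V) (ω : V → V → K) : Prop :=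
  ∀ i j : Bool, ∀ x ∈ sub i, ∀ y ∈ sub j, ω y x = -(ssign K i j * ω x y)

/-- Closedness (2-cocycle condition) of a bilinear form with respect to a bracket. -/
def IsClosedForm (sub : Bool → Submodule K V) (br : V → V → V) (ω : V → V → K) : Prop :=
  ∀ i j k : Bool, ∀ x ∈ sub i, ∀ y ∈ sub j, ∀ z ∈ sub k,
    ssign K i k * ω x (br y z) + ssign K k j * ω z (br x y) + ssign K j i * ω y (br z x) = 0

/-- Non-degeneracy of a bilinear form. -/
def IsNondegForm (ω : V → V → K) : Prop := ∀ x : V, (∀ y : V, ω x y = 0) → x = 0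

/-- A bilinear form is even if it vanishes on pairs of homogeneous elements
of opposite parity. -/
def IsEvenForm (sub : Bool → Submodule K V) (ω : V → V → K) : Prop :=
  ∀ x y : V, (x ∈ sub false ∧ y ∈ sub true) ∨ (x ∈ sub true ∧ y ∈ sub false) → ω x y = 0

/-- A bilinear form is odd if it vanishes on pairs of homogeneous elements
of the same parity. -/
def IsOddForm (sub : Bool → Submodule K V) (ω : V → V → K) : Prop :=
  ∀ i : Bool, ∀ x ∈ sub i, ∀ y ∈ sub i, ω x y = 0

/-- `(𝔤, ω)` is quasi-Frobenius: `ω` is a closed anti-symmetric non-degenerate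
bilinear form. -/
def IsQuasiFrobenius (sub : Bool → Submodule K V) (br : V → V → V) (ω : V → V → K) : Prop :=
  IsBilinMap K V K ω ∧ IsSuperSkew K V sub ω ∧ IsClosedForm K V sub br ω ∧ IsNondegForm K V ω

end Defs

section DoubleExtension

variable (K A : Type*) [Field K] [AddCommGroup A] [Module K A]

/-- The grading of the double extension `𝕂x ⊕ 𝔞 ⊕ 𝕂x*` of a graded space `𝔞`,
in coordinates `(s, a, t) = s·x + a + t·x*`, where `x` has parity `xpar` and
`x*` has parity `epar`. -/
def dblSub (subA : Bool → Submodule K A) (xpar epar : Bool) :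
    Bool → Submodule K (K × A × K) := fun i =>
  ((if i = xpar then (⊤ : Submodule K K) else ⊥)).prod
    ((subA i).prod (if i = epar then (⊤ : Submodule K K) else ⊥))

/-- The bracket of the `𝒟`-even double extension (orthosymplectic case), in coordinates
`(s, a, t) = s·x + a + t·x*`:  `[x, 𝕂x ⊕ 𝔞] = 0`, `[x,x*] = λx`,
`[a,b] = [a,b]_𝔞 + ω_𝔞(D a + D* a, b)·x`, `[x*,a] = D a + ω_𝔞(Z, a)·x`. -/
def dblBrEvenO (brA : A → A → A) (ωA : A → A → K) (D Ds : A → A) (lam : K) (Z : A) :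
    K × A × K → K × A × K → K × A × K := fun p q =>
  (p.1 * q.2.2 * lam - p.2.2 * q.1 * lam + ωA (D p.2.1 + Ds p.2.1) q.2.1
      + p.2.2 * ωA Z q.2.1 - q.2.2 * ωA Z p.2.1,
   brA p.2.1 q.2.1 + p.2.2 • D q.2.1 - q.2.2 • D p.2.1,
   0)

/-- The bracket of the `𝒟`-even double extension (periplectic case), in coordinates
`(s, a, t) = s·x + a + t·e`:  `[x, 𝕂x ⊕ 𝔞] = 0`, `[x,e] = λx`,
`[a,b] = [a,b]_𝔞 + (ω_𝔞(D a, b) + ω_𝔞(a, D b))·x`, `[e,a] = D a + ω_𝔞(Z, a)·x`. -/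
def dblBrEvenP (brA : A → A → A) (ωA : A → A → K) (D : A → A) (lam : K) (Z : A) :
    K × A × K → K × A × K → K × A × K := fun p q =>
  (p.1 * q.2.2 * lam - p.2.2 * q.1 * lam + ωA (D p.2.1) q.2.1 + ωA p.2.1 (D q.2.1)
      + p.2.2 * ωA Z q.2.1 - q.2.2 * ωA Z p.2.1,
   brA p.2.1 q.2.1 + p.2.2 • D q.2.1 - q.2.2 • D p.2.1,
   0)

/-- The form of a double extension when the two new generators do not have the same
odd parity: `ω|_{𝔞×𝔞} = ω_𝔞`, the new generators are isotropic and orthogonal to `𝔞`,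
and the pairing of the two new generators is `ω(x*, x) = 1`, `ω(x, x*) = −1`. -/
def dblFormMinus (ωA : A → A → K) : K × A × K → K × A × K → K :=
  fun p q => ωA p.2.1 q.2.1 + p.2.2 * q.1 - p.1 * q.2.2

/-- The form of a double extension when the two new generators are both odd:
`ω|_{𝔞×𝔞} = ω_𝔞`, the new generators are isotropic and orthogonal to `𝔞`, and
`ω(x*, x) = 1 = ω(x, x*)`. -/
def dblFormPlus (ωA : A → A → K) : K × A × K → K × A × K → K :=
  fun p q => ωA p.2.1 q.2.1 + p.2.2 * q.1 + p.1 * q.2.2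

end DoubleExtension

section MyAux

variable {K A : Type*} [Field K] [AddCommGroup A] [Module K A]

/-- Auxiliary: the bracket of the `𝒟`-odd (periplectic) double extension, where
`σ` is the grading involution of `𝔞` (identity on the even part, minus identity on
the odd part). -/
def dblBrOddP (brA : A → A → A) (ωA : A → A → K) (D : A → A) (Ds : A → A) (σ : A → A)
    (Z : A) : K × A × K → K × A × K → K × A × K := fun p q =>
  (ωA (D p.2.1 + Ds p.2.1) q.2.1 + p.2.2 * ωA Z q.2.1 + q.2.2 * ωA Z p.2.1,
   brA p.2.1 q.2.1 + p.2.2 • D q.2.1 - q.2.2 • D (σ p.2.1) + (2 * (p.2.2 * q.2.2)) • Z,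
   0)

end MyAux

set_option maxHeartbeats 1600000 in
/-- The `𝒟`-odd double extension of a periplectic quasi-Frobenius Lie
superalgebra `(𝔞, ω_𝔞)` by an odd derivation `𝒟` (with adjoint `𝒟*`) and an even
`a₀ ∈ 𝔞` with `𝒟² = ad_{a₀}`, `𝒟(a₀) = 𝒟*(a₀) = 0` and the coboundary condition,
carries a Lie superalgebra structure (with `x` even and `e` odd) on `𝕂x ⊕ 𝔞 ⊕ 𝕂e` with
the stated brackets, and the stated odd form is closed, anti-symmetric and
non-degenerate, i.e. the result is a periplectic quasi-Frobenius Lie superalgebra. -/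
theorem doddExtension_periplectic
    (K A : Type*) [Field K] [AddCommGroup A] [Module K A]
    (hchar : ringChar K ≠ 2)
    (subA : Bool → Submodule K A) (brA : A → A → A) (ωA : A → A → K)
    (hLie : IsLieSuperAlg K A subA brA)
    (hQF : IsQuasiFrobenius K A subA brA ωA)
    (hOdd : IsOddForm K A subA ωA)
    (D Ds : A → A)
    (hDadd : ∀ a b : A, D (a + b) = D a + D b)
    (hDsmul : ∀ (c : K) (a : A), D (c • a) = c • D a)
    (hDodd : ∀ i : Bool, ∀ a ∈ subA i, D a ∈ subA (!i))
    (hDder : ∀ i : Bool, ∀ f ∈ subA i, ∀ g : A,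
      D (brA f g) = brA (D f) g + ssign K i true • brA f (D g))
    (hDsadd : ∀ a b : A, Ds (a + b) = Ds a + Ds b)
    (hDssmul : ∀ (c : K) (a : A), Ds (c • a) = c • Ds a)
    (hDs : ∀ i : Bool, ∀ f ∈ subA i, ∀ g : A, ωA (D f) g = ssign K i true * ωA f (Ds g))
    (a₀ : A) (ha₀even : a₀ ∈ subA false)
    (hDD : ∀ a : A, D (D a) = brA a₀ a)
    (hDa₀ : D a₀ = 0) (hDsa₀ : Ds a₀ = 0)
    (hΩ : ∀ a b : A, ωA (D (D a) - Ds (Ds a)) b = ωA a₀ (brA a b)) :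
    ∃ brG : K × A × K → K × A × K → K × A × K,
      IsLieSuperAlg K (K × A × K) (dblSub K A subA false true) brG
      -- the defining brackets: `x = (1,0,0)` even, `e = (0,0,1)` odd, `[x, 𝔤] = 0`,
      -- `[a,b] = [a,b]_𝔞 + (ω_𝔞(𝒟a, b) + (−1)^{p(a)} ω_𝔞(a, 𝒟b))·x`,
      -- `[e,e] = 2a₀`, `[e,a] = 𝒟a + ω_𝔞(a₀, a)·x`
      ∧ (∀ g : K × A × K, brG (1, 0, 0) g = 0)
      ∧ (∀ i : Bool, ∀ a ∈ subA i, ∀ b : A,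
          brG (0, a, 0) (0, b, 0) = (ωA (D a) b + ssign K i true * ωA a (D b), brA a b, 0))
      ∧ brG (0, 0, 1) (0, 0, 1) = (0, (2 : K) • a₀, 0)
      ∧ (∀ a : A, brG (0, 0, 1) (0, a, 0) = (ωA a₀ a, D a, 0))
      -- the periplectic form
      ∧ IsBilinMap K (K × A × K) K (dblFormMinus K A ωA)
      ∧ IsSuperSkew K (K × A × K) (dblSub K A subA false true) (dblFormMinus K A ωA)
      ∧ IsClosedForm K (K × A × K) (dblSub K A subA false true) brG (dblFormMinus K A ωA)
      ∧ IsNondegForm K (K × A × K) (dblFormMinus K A ωA)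
      ∧ IsOddForm K (K × A × K) (dblSub K A subA false true) (dblFormMinus K A ωA) := by
  classical
  obtain ⟨ωaddl, ωsmull, ωaddr, ωsmulr⟩ := hQF.1
  have hskew := hQF.2.1
  have hclosed := hQF.2.2.1
  have hnondeg := hQF.2.2.2
  obtain ⟨braddl, brsmull, braddr, brsmulr⟩ := hLie.bilin
  have hω0l : ∀ y : A, ωA 0 y = 0 := fun y => by
    have := ωsmull 0 0 y; simpa using this
  have hω0r : ∀ x : A, ωA x 0 = 0 := fun x => by
    have := ωsmulr 0 x 0; simpa using this
  have hbr0l : ∀ y : A, brA 0 y = 0 := fun y => by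
    have := brsmull 0 0 y; simpa using this
  have hbr0r : ∀ x : A, brA x 0 = 0 := fun x => by
    have := brsmulr 0 x 0; simpa using this
  have hD0 : D 0 = 0 := by have := hDsmul 0 0; simpa using this
  have hDneg : ∀ a : A, D (-a) = -D a := by
    intro a; have := hDsmul (-1) a; simpa using this
  have hωnegr : ∀ x y : A, ωA x (-y) = -ωA x y := by
    intro x y; have := ωsmulr (-1) x y; simpa using this
  have hωsubl : ∀ x y z : A, ωA (x - y) z = ωA x z - ωA y z := by
    intro x y z
    have h1 := ωaddl x (-y) z
    have h2 := ωsmull (-1) y z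
    simp only [neg_one_smul] at h2
    rw [sub_eq_add_neg, h1, h2]
    ring
  have hωsubr : ∀ x y z : A, ωA x (y - z) = ωA x y - ωA x z := by
    intro x y z
    have h1 := ωaddr x y (-z)
    rw [sub_eq_add_neg, h1, hωnegr]
    ring
  have hbrnegr : ∀ x y : A, brA x (-y) = -brA x y := by
    intro x y; have := brsmulr (-1) x y; simpa using this
  have hDs0 : Ds 0 = 0 := by have := hDssmul 0 0; simpa using this
  have hcA := hLie.compl
  have hdecomp : ∀ a : A, ∃ u ∈ subA false, ∃ v ∈ subA true, a = u + v := by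
    intro a
    have ha : a ∈ subA false ⊔ subA true := by
      rw [hcA.sup_eq_top]; trivial
    rcases Submodule.mem_sup.1 ha with ⟨u, hu, v, hv, huv⟩
    exact ⟨u, hu, v, hv, huv.symm⟩
  have hflip : ∀ (i : Bool), ∀ x ∈ subA i, ∀ y ∈ subA (!i), ωA x y = -ωA y x := by
    intro i x hx y hy
    have h1 := hskew i (!i) x hx y hy
    cases i <;> simp [ssign] at h1 <;> rw [h1] <;> ring
  have hDspar : ∀ (i : Bool), ∀ a ∈ subA i, Ds a ∈ subA (!i) := by
    intro i a ha
    obtain ⟨u, hu, v, hv, huv⟩ := hdecomp (Ds a)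
    cases i
    · -- claim u = 0
      have hu0 : u = 0 := by
        apply hnondeg
        intro f
        obtain ⟨f0, hf0, f1, hf1, rfl⟩ := hdecomp f
        have e1 : ωA u f0 = 0 := hOdd false u hu f0 hf0
        have e2 : ωA u f1 = -ωA f1 u := hflip false u hu f1 hf1
        have e3 : ωA f1 (Ds a) = ωA f1 u + ωA f1 v := by
          rw [huv, ωaddr]
        have e4 : ωA f1 v = 0 := hOdd true f1 hf1 v hv
        have e5 : ωA (D f1) a = ssign K true true * ωA f1 (Ds a) := hDs true f1 hf1 a
        have e6 : ωA (D f1) a = 0 := hOdd false (D f1) (by simpa using hDodd true f1 hf1) a ha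
        simp [ssign] at e5
        have e7 : ωA f1 u = 0 := by
          rw [e6] at e5; rw [e3, e4] at e5; linear_combination e5
        rw [ωaddr, e1, e2, e7]; ring
      rw [huv, hu0, zero_add]; simpa using hv
    · -- claim v = 0
      have hv0 : v = 0 := by
        apply hnondeg
        intro f
        obtain ⟨f0, hf0, f1, hf1, rfl⟩ := hdecomp f
        have e1 : ωA v f1 = 0 := hOdd true v hv f1 hf1
        have e2 : ωA v f0 = -ωA f0 v := by
          have := hflip true v hv f0 (by simpa using hf0)
          simpa using this
        have e3 : ωA f0 (Ds a) = ωA f0 u + ωA f0 v := by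
          rw [huv, ωaddr]
        have e4 : ωA f0 u = 0 := hOdd false f0 hf0 u hu
        have e5 : ωA (D f0) a = ssign K false true * ωA f0 (Ds a) := hDs false f0 hf0 a
        have e6 : ωA (D f0) a = 0 := hOdd true (D f0) (by simpa using hDodd false f0 hf0) a ha
        simp [ssign] at e5
        have e7 : ωA f0 v = 0 := by
          rw [e6] at e5; rw [e3, e4] at e5; linear_combination -e5
        rw [ωaddr, e1, e2, e7]; ring
      rw [huv, hv0, add_zero]; simpa using hu
  -- the grading involution of A
  have hπ := Submodule.linearProjOfIsCompl (subA false) (subA true) hcA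
  set πf : A → A := fun a =>
    ((Submodule.linearProjOfIsCompl (subA false) (subA true) hcA a : A)) with hπf
  have hπadd : ∀ a b : A, πf (a + b) = πf a + πf b := by
    intro a b; simp [hπf, map_add]
  have hπsmul : ∀ (c : K) (a : A), πf (c • a) = c • πf a := by
    intro c a; simp [hπf, map_smul]
  have hπleft : ∀ a ∈ subA false, πf a = a := by
    intro a ha
    have := Submodule.linearProjOfIsCompl_apply_left hcA (⟨a, ha⟩ : subA false)
    exact congrArg Subtype.val this
  have hπright : ∀ a ∈ subA true, πf a = 0 := by
    intro a ha
    have := Submodule.linearProjOfIsCompl_apply_right hcA (⟨a, ha⟩ : subA true)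
    exact congrArg Subtype.val this
  set σ : A → A := fun a => πf a + πf a - a with hσf
  have hσadd : ∀ a b : A, σ (a + b) = σ a + σ b := by
    intro a b; simp only [hσf, hπadd]; abel
  have hσsmul : ∀ (c : K) (a : A), σ (c • a) = c • σ a := by
    intro c a; simp only [hσf, hπsmul, smul_sub, smul_add]
  have hσeven : ∀ a ∈ subA false, σ a = a := by
    intro a ha; simp only [hσf, hπleft a ha]; abel
  have hσodd : ∀ a ∈ subA true, σ a = -a := by
    intro a ha; simp only [hσf, hπright a ha]; abel
  have hσ0 : σ 0 = 0 := by
    simpa using hσeven 0 (Submodule.zero_mem _)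
  have hσmem : ∀ (i : Bool), ∀ a ∈ subA i, σ a ∈ subA i := by
    intro i a ha
    cases i
    · rw [hσeven a ha]; exact ha
    · rw [hσodd a ha]; exact neg_mem ha
  set brG : K × A × K → K × A × K → K × A × K := dblBrOddP brA ωA D Ds σ a₀ with hbrGf
  have hbrG : ∀ p q : K × A × K, brG p q =
      (ωA (D p.2.1 + Ds p.2.1) q.2.1 + p.2.2 * ωA a₀ q.2.1 + q.2.2 * ωA a₀ p.2.1,
       brA p.2.1 q.2.1 + p.2.2 • D q.2.1 - q.2.2 • D (σ p.2.1) + (2 * (p.2.2 * q.2.2)) • a₀,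
       0) := fun p q => rfl
  -- membership characterizations
  have memF : ∀ p : K × A × K,
      p ∈ dblSub K A subA false true false ↔ p.2.1 ∈ subA false ∧ p.2.2 = 0 := by
    intro p
    show p ∈ (⊤ : Submodule K K).prod ((subA false).prod (⊥ : Submodule K K)) ↔ _
    simp only [Submodule.mem_prod, Submodule.mem_top, Submodule.mem_bot, true_and]
  have memT : ∀ p : K × A × K,
      p ∈ dblSub K A subA false true true ↔ p.1 = 0 ∧ p.2.1 ∈ subA true := by
    intro p
    show p ∈ (⊥ : Submodule K K).prod ((subA true).prod (⊤ : Submodule K K)) ↔ _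
    simp only [Submodule.mem_prod, Submodule.mem_top, Submodule.mem_bot, and_true]
  -- key facts about the form and D, Ds
  have keyβhom : ∀ (i j : Bool), ∀ a ∈ subA i, ∀ b ∈ subA j,
      ωA (Ds a) b = ssign K i true * ωA a (D b) := by
    intro i j a ha b hb
    by_cases hij : i = j
    · subst hij
      have e1 : ωA a (D b) = -ωA (D b) a := hflip i a ha (D b) (hDodd i b hb)
      have e2 : ωA (D b) a = ssign K i true * ωA b (Ds a) := hDs i b hb a
      have e3 : ωA b (Ds a) = -ωA (Ds a) b := hflip i b hb (Ds a) (hDspar i a ha)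
      cases i <;> simp [ssign] at e1 e2 e3 ⊢ <;> rw [e1, e2, e3] <;> ring
    · have hj : j = !i := by cases i <;> cases j <;> revert hij <;> decide
      subst hj
      have e1 : ωA (Ds a) b = 0 := hOdd (!i) (Ds a) (hDspar i a ha) b hb
      have e2 : ωA a (D b) = 0 := hOdd i a ha (D b) (by simpa using hDodd (!i) b hb)
      rw [e1, e2]; ring
  have keyβ : ∀ (i : Bool), ∀ a ∈ subA i, ∀ b : A,
      ωA (D a + Ds a) b = ωA (D a) b + ssign K i true * ωA a (D b) := by
    intro i a ha b
    obtain ⟨u, hu, v, hv, rfl⟩ := hdecomp b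
    have h1 := keyβhom i false a ha u hu
    have h2 := keyβhom i true a ha v hv
    simp only [ωaddl, hDadd, ωaddr, h1, h2]
    ring
  have hDs_inv : ∀ (i : Bool), ∀ f ∈ subA i, ∀ g : A,
      ωA f (Ds g) = ssign K i true * ωA (D f) g := by
    intro i f hf g
    have h := hDs i f hf g
    cases i
    · simp [ssign] at h ⊢
      linear_combination -h
    · simp [ssign] at h ⊢
      linear_combination h
  have βswap : ∀ (i j : Bool), ∀ a ∈ subA i, ∀ b ∈ subA j,
      ωA (D b + Ds b) a = -(ssign K i j * ωA (D a + Ds a) b) := by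
    intro i j a ha b hb
    rw [keyβ j b hb a, keyβ i a ha b]
    by_cases hij : i = j
    · subst hij
      have e1 : ωA a (D b) = -ωA (D b) a := hflip i a ha (D b) (hDodd i b hb)
      have e2 : ωA b (D a) = -ωA (D a) b := hflip i b hb (D a) (hDodd i a ha)
      cases i
      · simp [ssign]
        linear_combination e1 + e2
      · simp [ssign]
        linear_combination e1 - e2
    · have hj : j = !i := by cases i <;> cases j <;> revert hij <;> decide
      subst hj
      have e1 : ωA (D b) a = 0 :=
        hOdd i (D b) (by simpa using hDodd (!i) b hb) a ha
      have e2 : ωA b (D a) = 0 := hOdd (!i) b hb (D a) (hDodd i a ha)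
      have e3 : ωA (D a) b = 0 := hOdd (!i) (D a) (hDodd i a ha) b hb
      have e4 : ωA a (D b) = 0 := hOdd i a ha (D b) (by simpa using hDodd (!i) b hb)
      rw [e1, e2, e3, e4]; ring
  have hωDa₀ : ∀ (i : Bool), ∀ f ∈ subA i, ωA (D f) a₀ = 0 := by
    intro i f hf
    have := hDs i f hf a₀
    rw [hDsa₀, hω0r] at this
    simpa using this
  have hωa₀D : ∀ (i : Bool), ∀ f ∈ subA i, ωA a₀ (D f) = 0 := by
    intro i f hf
    cases i
    · have := hflip false a₀ ha₀even (D f) (by simpa using hDodd false f hf)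
      rw [this, hωDa₀ false f hf]; ring
    · exact hOdd false a₀ ha₀even (D f) (by simpa using hDodd true f hf)
  have hωa₀a₀ : ωA a₀ a₀ = 0 := hOdd false a₀ ha₀even a₀ ha₀even
  have hωa₀Ds : ∀ g : A, ωA a₀ (Ds g) = 0 := by
    intro g
    have := hDs false a₀ ha₀even g
    rw [hDa₀, hω0l] at this
    simp [ssign] at this
    linear_combination -this
  have gaddl : ∀ x y z : K × A × K, brG (x + y) z = brG x z + brG y z := by
    intro x y z
    rw [hbrG, hbrG, hbrG]
    refine Prod.ext ?_ (Prod.ext ?_ ?_)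
    · simp only [Prod.fst_add, Prod.snd_add, hDadd, hDsadd, ωaddl, ωaddr, braddl]
      ring
    · simp only [Prod.fst_add, Prod.snd_add, hDadd, hDsadd, hσadd, braddl]
      module
    · simp
  have gsmull : ∀ (c : K) (x y : K × A × K), brG (c • x) y = c • brG x y := by
    intro c x y
    rw [hbrG, hbrG]
    refine Prod.ext ?_ (Prod.ext ?_ ?_)
    · simp only [Prod.smul_fst, Prod.smul_snd, hDsmul, hDssmul, ωaddl, ωsmull, ωsmulr,
        smul_eq_mul]
      ring
    · simp only [Prod.smul_fst, Prod.smul_snd, hDsmul, hDssmul, hσsmul, brsmull,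
        smul_eq_mul]
      module
    · simp
  have gaddr : ∀ x y z : K × A × K, brG x (y + z) = brG x y + brG x z := by
    intro x y z
    rw [hbrG, hbrG, hbrG]
    refine Prod.ext ?_ (Prod.ext ?_ ?_)
    · simp only [Prod.fst_add, Prod.snd_add, hDadd, hDsadd, ωaddl, ωaddr, braddr]
      ring
    · simp only [Prod.fst_add, Prod.snd_add, hDadd, braddr]
      module
    · simp
  have gsmulr : ∀ (c : K) (x y : K × A × K), brG x (c • y) = c • brG x y := by
    intro c x y
    rw [hbrG, hbrG]
    refine Prod.ext ?_ (Prod.ext ?_ ?_)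
    · simp only [Prod.smul_fst, Prod.smul_snd, hDsmul, ωsmull, ωsmulr, ωaddl,
        smul_eq_mul]
      ring
    · simp only [Prod.smul_fst, Prod.smul_snd, hDsmul, brsmulr, smul_eq_mul]
      module
    · simp
  have gXl : ∀ (s : K) (q : K × A × K), brG (s, 0, 0) q = 0 := by
    intro s q
    rw [hbrG]
    simp [hD0, hDs0, hσ0, hω0l, hω0r, hbr0l, Prod.ext_iff]
  have gXr : ∀ (s : K) (q : K × A × K), brG q (s, 0, 0) = 0 := by
    intro s q
    rw [hbrG]
    simp [hD0, hω0r, hbr0r, Prod.ext_iff]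
  have gsplit : ∀ p : K × A × K,
      p = ((p.1, 0, 0) : K × A × K) + (0, p.2.1, 0) + p.2.2 • ((0:K), (0:A), (1:K)) := by
    intro p
    refine Prod.ext ?_ (Prod.ext ?_ ?_) <;> simp
  have gexpl : ∀ p q : K × A × K,
      brG p q = brG (0, p.2.1, 0) q + p.2.2 • brG ((0:K), (0:A), (1:K)) q := by
    intro p q
    conv_lhs => rw [gsplit p]
    rw [gaddl, gaddl, gXl, gsmull]
    simp
  have gexpr : ∀ p q : K × A × K,
      brG q p = brG q (0, p.2.1, 0) + p.2.2 • brG q ((0:K), (0:A), (1:K)) := by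
    intro p q
    conv_lhs => rw [gsplit p]
    rw [gaddr, gaddr, gXr, gsmulr]
    simp
  have gAM : ∀ (a : A) (c : K) (m : A),
      brG (0, a, 0) (c, m, 0) = (ωA (D a + Ds a) m, brA a m, 0) := by
    intro a c m; rw [hbrG]; simp
  have gEM : ∀ (c : K) (m : A),
      brG ((0:K), (0:A), (1:K)) (c, m, 0) = (ωA a₀ m, D m, 0) := by
    intro c m; rw [hbrG]
    simp [hD0, hDs0, hσ0, hω0l, hω0r, hbr0l]
  have gAE : ∀ a : A,
      brG (0, a, 0) ((0:K), (0:A), (1:K)) = (ωA a₀ a, -D (σ a), 0) := by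
    intro a; rw [hbrG]
    simp [hD0, hω0r, hbr0r]
  have gEE : brG ((0:K), (0:A), (1:K)) ((0:K), (0:A), (1:K)) = (0, (2:K) • a₀, 0) := by
    rw [hbrG]
    simp [hD0, hDs0, hσ0, hω0l, hω0r, hbr0l]
  set Jg : K → K → K → (K × A × K) → (K × A × K) → (K × A × K) → (K × A × K) :=
    fun s1 s2 s3 u v w =>
      s1 • brG u (brG v w) + s2 • brG v (brG w u) + s3 • brG w (brG u v) with hJgf
  have hJg : ∀ s1 s2 s3 u v w, Jg s1 s2 s3 u v w =
      s1 • brG u (brG v w) + s2 • brG v (brG w u) + s3 • brG w (brG u v) :=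
    fun _ _ _ _ _ _ => rfl
  have Jcyc : ∀ s1 s2 s3 u v w, Jg s1 s2 s3 u v w = Jg s2 s3 s1 v w u := by
    intro s1 s2 s3 u v w
    rw [hJg, hJg]
    abel
  have Jexp1 : ∀ s1 s2 s3 u v w, Jg s1 s2 s3 u v w =
      Jg s1 s2 s3 (0, u.2.1, 0) v w + u.2.2 • Jg s1 s2 s3 ((0:K), (0:A), (1:K)) v w := by
    intro s1 s2 s3 u v w
    simp only [hJg]
    rw [gexpl u (brG v w)]
    rw [gexpr u w]
    rw [gaddr, gsmulr]
    rw [gexpl u v]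
    rw [gaddr, gsmulr]
    module
  have Jexp2 : ∀ s1 s2 s3 u v w, Jg s1 s2 s3 u v w =
      Jg s1 s2 s3 u (0, v.2.1, 0) w + v.2.2 • Jg s1 s2 s3 u ((0:K), (0:A), (1:K)) w := by
    intro s1 s2 s3 u v w
    rw [Jcyc s1 s2 s3 u v w, Jexp1, ← Jcyc s1 s2 s3 u (0, v.2.1, 0) w,
      ← Jcyc s1 s2 s3 u ((0:K), (0:A), (1:K)) w]
  have Jexp3 : ∀ s1 s2 s3 u v w, Jg s1 s2 s3 u v w =
      Jg s1 s2 s3 u v (0, w.2.1, 0) + w.2.2 • Jg s1 s2 s3 u v ((0:K), (0:A), (1:K)) := by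
    intro s1 s2 s3 u v w
    rw [Jcyc s1 s2 s3 u v w, Jcyc s2 s3 s1 v w u, Jexp1,
      ← Jcyc s2 s3 s1 v (0, w.2.1, 0) u, ← Jcyc s1 s2 s3 u v (0, w.2.1, 0),
      ← Jcyc s2 s3 s1 v ((0:K), (0:A), (1:K)) u,
      ← Jcyc s1 s2 s3 u v ((0:K), (0:A), (1:K))]
  have βclosed : ∀ (i j k : Bool), ∀ a ∈ subA i, ∀ b ∈ subA j, ∀ c ∈ subA k,
      ssign K i k * ωA (D a + Ds a) (brA b c) + ssign K j i * ωA (D b + Ds b) (brA c a)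
        + ssign K k j * ωA (D c + Ds c) (brA a b) = 0 := by
    intro i j k a ha b hb c hc
    rw [keyβ i a ha, keyβ j b hb, keyβ k c hc]
    rw [hDder j b hb c, hDder k c hc a, hDder i a ha b]
    simp only [ωaddr, ωsmulr, smul_eq_mul]
    have H1 := hclosed (!i) j k (D a) (hDodd i a ha) b hb c hc
    have H2 := hclosed i (!j) k a ha (D b) (hDodd j b hb) c hc
    have H3 := hclosed i j (!k) a ha b hb (D c) (hDodd k c hc)
    cases i <;> cases j <;> cases k <;> simp [ssign] at H1 H2 H3 ⊢
    · linear_combination H1 + H2 + H3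
    · linear_combination -H1 + H2 + H3
    · linear_combination H1 + H2 - H3
    · linear_combination -H1 + H2 - H3
    · linear_combination H1 - H2 + H3
    · linear_combination -H1 - H2 + H3
    · linear_combination H1 - H2 - H3
    · linear_combination -H1 - H2 - H3
  have jacA : ∀ (i j k : Bool), ∀ a ∈ subA i, ∀ b ∈ subA j, ∀ c ∈ subA k,
      Jg (ssign K i k) (ssign K j i) (ssign K k j) (0, a, 0) (0, b, 0) (0, c, 0) = 0 := by
    intro i j k a ha b hb c hc
    rw [hJg, gAM b 0 c, gAM c 0 a, gAM a 0 b,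
      gAM a (ωA (D b + Ds b) c) (brA b c), gAM b (ωA (D c + Ds c) a) (brA c a),
      gAM c (ωA (D a + Ds a) b) (brA a b)]
    have h1 := βclosed i j k a ha b hb c hc
    have h2 := hLie.jacobi i j k a ha b hb c hc
    refine Prod.ext ?_ (Prod.ext ?_ ?_)
    · simp only [Prod.fst_add, Prod.smul_fst, smul_eq_mul, Prod.fst_zero]
      linear_combination h1
    · simp only [Prod.snd_add, Prod.smul_snd, Prod.snd_zero, Prod.fst_add, Prod.fst_zero,
        Prod.smul_fst]
      exact h2
    · simp
  have jacABE : ∀ (i j : Bool), ∀ a ∈ subA i, ∀ b ∈ subA j,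
      Jg (ssign K i true) (ssign K j i) (ssign K true j) (0, a, 0) (0, b, 0)
        ((0:K), (0:A), (1:K)) = 0 := by
    intro i j a ha b hb
    rw [hJg, gAE b, gEM 0 a, gAM a 0 b, gAM a (ωA a₀ b) (-D (σ b)),
      gAM b (ωA a₀ a) (D a), gEM (ωA (D a + Ds a) b) (brA a b)]
    have hba : brA b (D a) = -(ssign K (!i) j • brA (D a) b) :=
      hLie.antisymm (!i) j (D a) (hDodd i a ha) b hb
    have hder := hDder i a ha b
    refine Prod.ext ?_ (Prod.ext ?_ ?_)
    · simp only [Prod.fst_add, Prod.smul_fst, smul_eq_mul, Prod.fst_zero]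
      cases i <;> cases j
      · rw [hσeven b hb, hωnegr, keyβ false a ha (D b), keyβ false b hb (D a),
          hDD b, hDD a]
        have z1 : ωA (D a) (D b) = 0 := hOdd true (D a) (by simpa using hDodd false a ha)
          (D b) (by simpa using hDodd false b hb)
        have z2 : ωA a (brA a₀ b) = 0 := hOdd false a ha (brA a₀ b)
          (by simpa using hLie.graded false false a₀ ha₀even b hb)
        have z3 : ωA (D b) (D a) = 0 := hOdd true (D b) (by simpa using hDodd false b hb)
          (D a) (by simpa using hDodd false a ha)
        have z4 : ωA b (brA a₀ a) = 0 := hOdd false b hb (brA a₀ a)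
          (by simpa using hLie.graded false false a₀ ha₀even a ha)
        have z5 : ωA a₀ (brA a b) = 0 := hOdd false a₀ ha₀even (brA a b)
          (by simpa using hLie.graded false false a ha b hb)
        simp [ssign, z1, z2, z3, z4, z5]
      · rw [hσodd b hb, hDneg, neg_neg, keyβ false a ha (D b), keyβ true b hb (D a),
          hDD b, hDD a]
        have e5 : ωA a₀ (brA a b) = ωA (brA a₀ a) b - ωA (Ds (Ds a)) b := by
          rw [← hΩ a b, hωsubl, hDD a]
        have F1 : ωA (D b) (D a) = -ωA (D a) (D b) :=
          hflip false (D b) (by simpa using hDodd true b hb) (D a)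
            (by simpa using hDodd false a ha)
        have F2 : ωA b (brA a₀ a) = -ωA (brA a₀ a) b :=
          hflip true b hb (brA a₀ a)
            (by simpa using hLie.graded false false a₀ ha₀even a ha)
        have E6 : ωA b (Ds (Ds a)) = -ωA (D b) (Ds a) := by
          have := hDs_inv true b hb (Ds a)
          simpa [ssign] using this
        have E7 : ωA (D b) (Ds a) = ωA (brA a₀ b) a := by
          have := hDs_inv false (D b) (by simpa using hDodd true b hb) a
          rw [hDD b] at this
          simpa [ssign] using this
        have E8 : ωA (Ds (Ds a)) b = -ωA b (Ds (Ds a)) :=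
          hflip false (Ds (Ds a))
            (by simpa using hDspar true (Ds a) (hDspar false a ha)) b hb
        have E9 : ωA a (brA a₀ b) = -ωA (brA a₀ b) a :=
          hflip false a ha (brA a₀ b)
            (by simpa using hLie.graded false true a₀ ha₀even b hb)
        rw [e5]
        simp only [ssign]
        norm_num
        linear_combination F1 - F2 + E9 + E8 - E6 + E7
      · rw [hσeven b hb, hωnegr, keyβ true a ha (D b), keyβ false b hb (D a),
          hDD b, hDD a]
        have e5 : ωA a₀ (brA a b) = ωA (brA a₀ a) b - ωA (Ds (Ds a)) b := by
          rw [← hΩ a b, hωsubl, hDD a]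
        have F1 : ωA (D b) (D a) = -ωA (D a) (D b) :=
          hflip true (D b) (by simpa using hDodd false b hb) (D a)
            (by simpa using hDodd true a ha)
        have F2 : ωA b (brA a₀ a) = -ωA (brA a₀ a) b :=
          hflip false b hb (brA a₀ a)
            (by simpa using hLie.graded false true a₀ ha₀even a ha)
        have E6 : ωA b (Ds (Ds a)) = ωA (D b) (Ds a) := by
          have := hDs_inv false b hb (Ds a)
          simpa [ssign] using this
        have E7 : ωA (D b) (Ds a) = -ωA (brA a₀ b) a := by
          have := hDs_inv true (D b) (by simpa using hDodd false b hb) a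
          rw [hDD b] at this
          simpa [ssign] using this
        have E8 : ωA (Ds (Ds a)) b = -ωA b (Ds (Ds a)) :=
          hflip true (Ds (Ds a))
            (by simpa using hDspar false (Ds a) (hDspar true a ha)) b hb
        have E9 : ωA a (brA a₀ b) = -ωA (brA a₀ b) a :=
          hflip true a ha (brA a₀ b)
            (by simpa using hLie.graded false false a₀ ha₀even b hb)
        rw [e5]
        simp only [ssign]
        norm_num
        linear_combination F1 + F2 - E9 - E8 + E6 + E7
      · rw [hσodd b hb, hDneg, neg_neg, keyβ true a ha (D b), keyβ true b hb (D a),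
          hDD b, hDD a]
        have z1 : ωA (D a) (D b) = 0 := hOdd false (D a) (by simpa using hDodd true a ha)
          (D b) (by simpa using hDodd true b hb)
        have z2 : ωA a (brA a₀ b) = 0 := hOdd true a ha (brA a₀ b)
          (by simpa using hLie.graded false true a₀ ha₀even b hb)
        have z3 : ωA (D b) (D a) = 0 := hOdd false (D b) (by simpa using hDodd true b hb)
          (D a) (by simpa using hDodd true a ha)
        have z4 : ωA b (brA a₀ a) = 0 := hOdd true b hb (brA a₀ a)
          (by simpa using hLie.graded false true a₀ ha₀even a ha)
        have z5 : ωA a₀ (brA a b) = 0 := hOdd false a₀ ha₀even (brA a b)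
          (by simpa using hLie.graded true true a ha b hb)
        simp [ssign, z1, z2, z3, z4, z5]
    · simp only [Prod.snd_add, Prod.smul_snd, Prod.snd_zero, Prod.fst_add,
        Prod.fst_zero, Prod.smul_fst]
      cases i <;> cases j
      · rw [hσeven b hb, hbrnegr, hder, hba]
        simp [ssign]
      · rw [hσodd b hb, hDneg, neg_neg, hder, hba]
        simp [ssign]
      · rw [hσeven b hb, hbrnegr, hder, hba]
        simp [ssign]
      · rw [hσodd b hb, hDneg, neg_neg, hder, hba]
        simp [ssign]
    · simp
  have jacAEE : ∀ (i : Bool), ∀ a ∈ subA i,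
      Jg (ssign K i true) (ssign K true i) (ssign K true true) (0, a, 0)
        ((0:K), (0:A), (1:K)) ((0:K), (0:A), (1:K)) = 0 := by
    intro i a ha
    rw [hJg, gEE, gEM 0 a, gAE a, gAM a 0 ((2:K) • a₀),
      gEM (ωA a₀ a) (D a), gEM (ωA a₀ a) (-D (σ a))]
    have hba : brA a a₀ = -(ssign K false i • brA a₀ a) :=
      hLie.antisymm false i a₀ ha₀even a ha
    refine Prod.ext ?_ (Prod.ext ?_ ?_)
    · simp only [Prod.fst_add, Prod.smul_fst, smul_eq_mul, Prod.fst_zero]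
      have z2 : ωA a₀ (D a) = 0 := hωa₀D i a ha
      have z1 : ωA (D a + Ds a) ((2:K) • a₀) = 0 := by
        rw [ωsmulr, ωaddl]
        have w1 : ωA (D a) a₀ = 0 := hωDa₀ i a ha
        have w2 : ωA (Ds a) a₀ = 0 := by
          cases i
          · rw [hflip true (Ds a) (by simpa using hDspar false a ha) a₀ ha₀even,
              hωa₀Ds]
            ring
          · exact hOdd false (Ds a) (by simpa using hDspar true a ha) a₀ ha₀even
        rw [w1, w2]
        simp
      cases i
      · rw [hσeven a ha, hωnegr]
        simp [ssign, z1, z2]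
      · rw [hσodd a ha, hDneg, neg_neg]
        simp [ssign, z1, z2]
    · simp only [Prod.snd_add, Prod.smul_snd, Prod.snd_zero, Prod.fst_add,
        Prod.fst_zero, Prod.smul_fst]
      rw [brsmulr, hba, hDD a]
      cases i
      · rw [hσeven a ha, hDneg (D a), hDD a]
        simp [ssign]
        module
      · rw [hσodd a ha, hDneg a, neg_neg, hDD a]
        simp [ssign]
        module
    · simp
  have jacEEE :
      Jg (ssign K true true) (ssign K true true) (ssign K true true)
        ((0:K), (0:A), (1:K)) ((0:K), (0:A), (1:K)) ((0:K), (0:A), (1:K)) = 0 := by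
    rw [hJg, gEE, gEM 0 ((2:K) • a₀)]
    have : D ((2:K) • a₀) = 0 := by rw [hDsmul, hDa₀, smul_zero]
    rw [this, ωsmulr, hωa₀a₀]
    simp
  set Cg : K → K → K → (K × A × K) → (K × A × K) → (K × A × K) → K :=
    fun s1 s2 s3 u v w =>
      s1 * dblFormMinus K A ωA u (brG v w) + s2 * dblFormMinus K A ωA w (brG u v)
        + s3 * dblFormMinus K A ωA v (brG w u) with hCgf
  have hCg : ∀ s1 s2 s3 u v w, Cg s1 s2 s3 u v w =
      s1 * dblFormMinus K A ωA u (brG v w) + s2 * dblFormMinus K A ωA w (brG u v)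
        + s3 * dblFormMinus K A ωA v (brG w u) := fun _ _ _ _ _ _ => rfl
  have Ccyc : ∀ s1 s2 s3 u v w, Cg s1 s2 s3 u v w = Cg s3 s1 s2 v w u := by
    intro s1 s2 s3 u v w
    rw [hCg, hCg]
    ring
  have fGaddr : ∀ x y z : K × A × K,
      dblFormMinus K A ωA x (y + z) = dblFormMinus K A ωA x y + dblFormMinus K A ωA x z := by
    intro x y z
    simp only [dblFormMinus, Prod.fst_add, Prod.snd_add, ωaddr]
    ring
  have fGsmulr : ∀ (c : K) (x y : K × A × K),
      dblFormMinus K A ωA x (c • y) = c * dblFormMinus K A ωA x y := by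
    intro c x y
    simp only [dblFormMinus, Prod.smul_fst, Prod.smul_snd, ωsmulr, smul_eq_mul]
    ring
  have ωGbr : ∀ u v w : K × A × K, dblFormMinus K A ωA u (brG v w)
      = ωA u.2.1 (brG v w).2.1 + u.2.2 * (brG v w).1 := by
    intro u v w
    rw [hbrG]
    simp [dblFormMinus]
  have Cexp1 : ∀ s1 s2 s3 u v w, Cg s1 s2 s3 u v w =
      Cg s1 s2 s3 (0, u.2.1, 0) v w + u.2.2 * Cg s1 s2 s3 ((0:K), (0:A), (1:K)) v w := by
    intro s1 s2 s3 u v w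
    simp only [hCg]
    rw [ωGbr u v w, ωGbr (0, u.2.1, 0) v w, ωGbr ((0:K), (0:A), (1:K)) v w]
    rw [gexpl u v, gexpr u w]
    rw [fGaddr, fGsmulr, fGaddr, fGsmulr]
    simp only [hω0l]
    ring
  have Cexp2 : ∀ s1 s2 s3 u v w, Cg s1 s2 s3 u v w =
      Cg s1 s2 s3 u (0, v.2.1, 0) w + v.2.2 * Cg s1 s2 s3 u ((0:K), (0:A), (1:K)) w := by
    intro s1 s2 s3 u v w
    rw [Ccyc s1 s2 s3 u v w, Cexp1, ← Ccyc s1 s2 s3 u (0, v.2.1, 0) w,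
      ← Ccyc s1 s2 s3 u ((0:K), (0:A), (1:K)) w]
  have Cexp3 : ∀ s1 s2 s3 u v w, Cg s1 s2 s3 u v w =
      Cg s1 s2 s3 u v (0, w.2.1, 0) + w.2.2 * Cg s1 s2 s3 u v ((0:K), (0:A), (1:K)) := by
    intro s1 s2 s3 u v w
    rw [Ccyc s1 s2 s3 u v w, Ccyc s3 s1 s2 v w u, Cexp1,
      ← Ccyc s3 s1 s2 v (0, w.2.1, 0) u, ← Ccyc s1 s2 s3 u v (0, w.2.1, 0),
      ← Ccyc s3 s1 s2 v ((0:K), (0:A), (1:K)) u,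
      ← Ccyc s1 s2 s3 u v ((0:K), (0:A), (1:K))]
  have clA : ∀ (i j k : Bool), ∀ a ∈ subA i, ∀ b ∈ subA j, ∀ c ∈ subA k,
      Cg (ssign K i k) (ssign K k j) (ssign K j i) (0, a, 0) (0, b, 0) (0, c, 0) = 0 := by
    intro i j k a ha b hb c hc
    rw [hCg, gAM b 0 c, gAM a 0 b, gAM c 0 a]
    simp only [dblFormMinus]
    simp [hω0l]
    have := hclosed i j k a ha b hb c hc
    linear_combination this
  have clABE : ∀ (i j : Bool), ∀ a ∈ subA i, ∀ b ∈ subA j,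
      Cg (ssign K i true) (ssign K true j) (ssign K j i) (0, a, 0) (0, b, 0)
        ((0:K), (0:A), (1:K)) = 0 := by
    intro i j a ha b hb
    rw [hCg, gAE b, gAM a 0 b, gEM 0 a]
    simp only [dblFormMinus]
    simp [hω0l]
    rw [keyβ i a ha b]
    cases i <;> cases j
    · rw [hσeven b hb, hωnegr]
      have F : ωA (D a) b = -ωA b (D a) :=
        hflip true (D a) (by simpa using hDodd false a ha) b hb
      simp [ssign]
      linear_combination F
    · rw [hσodd b hb, hDneg, neg_neg]
      have z1 : ωA (D a) b = 0 :=
        hOdd true (D a) (by simpa using hDodd false a ha) b hb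
      have z2 : ωA b (D a) = 0 :=
        hOdd true b hb (D a) (by simpa using hDodd false a ha)
      simp [ssign, z1, z2]
    · rw [hσeven b hb, hωnegr]
      have z1 : ωA (D a) b = 0 :=
        hOdd false (D a) (by simpa using hDodd true a ha) b hb
      have z2 : ωA b (D a) = 0 :=
        hOdd false b hb (D a) (by simpa using hDodd true a ha)
      simp [ssign, z1, z2]
    · rw [hσodd b hb, hDneg, neg_neg]
      have F : ωA (D a) b = -ωA b (D a) :=
        hflip false (D a) (by simpa using hDodd true a ha) b hb
      simp [ssign]
      linear_combination -F
  have clAEE : ∀ (i : Bool), ∀ a ∈ subA i,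
      Cg (ssign K i true) (ssign K true true) (ssign K true i) (0, a, 0)
        ((0:K), (0:A), (1:K)) ((0:K), (0:A), (1:K)) = 0 := by
    intro i a ha
    rw [hCg, gEE, gAE a, gEM 0 a]
    simp only [dblFormMinus]
    simp [hω0l, ωsmulr]
    cases i
    · have z1 : ωA a a₀ = 0 := hOdd false a ha a₀ ha₀even
      have z2 : ωA a₀ a = 0 := hOdd false a₀ ha₀even a ha
      simp [ssign, z1, z2]
    · have F : ωA a a₀ = -ωA a₀ a := hflip true a ha a₀ ha₀even
      simp [ssign]
      linear_combination -2 * F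
  have clEEE :
      Cg (ssign K true true) (ssign K true true) (ssign K true true)
        ((0:K), (0:A), (1:K)) ((0:K), (0:A), (1:K)) ((0:K), (0:A), (1:K)) = 0 := by
    rw [hCg, gEE]
    simp [dblFormMinus, hω0l]
  refine ⟨brG, ⟨?_, ?_, ?_, ?_, ?_, ?_⟩, ?_, ?_, ?_, ?_, ?_, ?_, ?_, ?_, ?_⟩
  · -- compl
    rw [isCompl_iff]
    constructor
    · rw [disjoint_iff, Submodule.eq_bot_iff]
      intro p hp
      obtain ⟨hpF, hpT⟩ := Submodule.mem_inf.1 hp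
      obtain ⟨h1, h2⟩ := (memF p).1 hpF
      obtain ⟨h3, h4⟩ := (memT p).1 hpT
      have h5 : p.2.1 = 0 := by
        have hd := hcA.disjoint
        rw [disjoint_iff, Submodule.eq_bot_iff] at hd
        exact hd p.2.1 (Submodule.mem_inf.2 ⟨h1, h4⟩)
      exact Prod.ext h3 (Prod.ext h5 h2)
    · rw [codisjoint_iff, Submodule.eq_top_iff']
      intro p
      obtain ⟨u, hu, v, hv, hp⟩ := hdecomp p.2.1
      refine Submodule.mem_sup.2 ⟨(p.1, u, 0), (memF _).2 ⟨hu, rfl⟩,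
        (0, v, p.2.2), (memT _).2 ⟨rfl, hv⟩, ?_⟩
      simp [Prod.ext_iff, ← hp]
  · -- bilin
    exact ⟨gaddl, gsmull, gaddr, gsmulr⟩
  · -- graded
    intro i j x hx y hy
    cases i <;> cases j
    · obtain ⟨hx1, hx2⟩ := (memF x).1 hx
      obtain ⟨hy1, hy2⟩ := (memF y).1 hy
      rw [hbrG]
      refine (memF _).2 ⟨?_, rfl⟩
      simp only [hx2, hy2, zero_smul, smul_zero, mul_zero, zero_mul, add_zero, sub_zero]
      simpa using hLie.graded false false x.2.1 hx1 y.2.1 hy1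
    · obtain ⟨hx1, hx2⟩ := (memF x).1 hx
      obtain ⟨hy1, hy2⟩ := (memT y).1 hy
      rw [hbrG]
      refine (memT _).2 ⟨?_, ?_⟩
      · have e1 : ωA (D x.2.1) y.2.1 = 0 :=
          hOdd true (D x.2.1) (by simpa using hDodd false x.2.1 hx1) y.2.1 hy2
        have e2 : ωA (Ds x.2.1) y.2.1 = 0 :=
          hOdd true (Ds x.2.1) (by simpa using hDspar false x.2.1 hx1) y.2.1 hy2
        have e3 : ωA a₀ x.2.1 = 0 := hOdd false a₀ ha₀even x.2.1 hx1
        simp only [hx2, ωaddl, e1, e2, e3, zero_mul, mul_zero, add_zero, zero_add]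
      · have m1 : brA x.2.1 y.2.1 ∈ subA true := by
          simpa using hLie.graded false true x.2.1 hx1 y.2.1 hy2
        have m2 : D (σ x.2.1) ∈ subA true := by
          simpa using hDodd false (σ x.2.1) (hσmem false x.2.1 hx1)
        simp only [hx2, zero_smul, zero_mul, mul_zero, zero_add, add_zero, zero_sub]
        exact sub_mem m1 (Submodule.smul_mem _ _ m2)
    · obtain ⟨hx1, hx2⟩ := (memT x).1 hx
      obtain ⟨hy1, hy2⟩ := (memF y).1 hy
      rw [hbrG]
      refine (memT _).2 ⟨?_, ?_⟩
      · have e1 : ωA (D x.2.1) y.2.1 = 0 :=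
          hOdd false (D x.2.1) (by simpa using hDodd true x.2.1 hx2) y.2.1 hy1
        have e2 : ωA (Ds x.2.1) y.2.1 = 0 :=
          hOdd false (Ds x.2.1) (by simpa using hDspar true x.2.1 hx2) y.2.1 hy1
        have e3 : ωA a₀ y.2.1 = 0 := hOdd false a₀ ha₀even y.2.1 hy1
        simp only [hy2, ωaddl, e1, e2, e3, zero_mul, mul_zero, add_zero, zero_add]
      · have m1 : brA x.2.1 y.2.1 ∈ subA true := by
          simpa using hLie.graded true false x.2.1 hx2 y.2.1 hy1
        have m2 : D y.2.1 ∈ subA true := by simpa using hDodd false y.2.1 hy1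
        simp only [hy2, zero_smul, mul_zero, sub_zero, add_zero]
        exact add_mem m1 (Submodule.smul_mem _ _ m2)
    · obtain ⟨hx1, hx2⟩ := (memT x).1 hx
      obtain ⟨hy1, hy2⟩ := (memT y).1 hy
      rw [hbrG]
      refine (memF _).2 ⟨?_, rfl⟩
      have m1 : brA x.2.1 y.2.1 ∈ subA false := by
        simpa using hLie.graded true true x.2.1 hx2 y.2.1 hy2
      have m2 : D y.2.1 ∈ subA false := by simpa using hDodd true y.2.1 hy2
      have m3 : D (σ x.2.1) ∈ subA false := by
        simpa using hDodd true (σ x.2.1) (hσmem true x.2.1 hx2)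
      exact add_mem (sub_mem (add_mem m1 (Submodule.smul_mem _ _ m2))
        (Submodule.smul_mem _ _ m3)) (Submodule.smul_mem _ _ ha₀even)
  · -- antisymm
    intro i j x hx y hy
    have hx1 : x.2.1 ∈ subA i := by
      cases i
      · exact ((memF x).1 hx).1
      · exact ((memT x).1 hx).2
    have hy1 : y.2.1 ∈ subA j := by
      cases j
      · exact ((memF y).1 hy).1
      · exact ((memT y).1 hy).2
    have hbswap := βswap i j x.2.1 hx1 y.2.1 hy1
    have hbras := hLie.antisymm i j x.2.1 hx1 y.2.1 hy1
    rw [hbrG, hbrG]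
    cases i <;> cases j
    · obtain ⟨-, hx2⟩ := (memF x).1 hx
      obtain ⟨-, hy2⟩ := (memF y).1 hy
      simp [ssign] at hbswap hbras
      refine Prod.ext ?_ (Prod.ext ?_ ?_)
      · simp [hx2, hy2, ssign]
        linear_combination hbswap
      · simp [hx2, hy2, ssign, hbras]
      · simp
    · obtain ⟨-, hx2⟩ := (memF x).1 hx
      obtain ⟨hy0, -⟩ := (memT y).1 hy
      have e3 : ωA a₀ x.2.1 = 0 := hOdd false a₀ ha₀even x.2.1 hx1
      rw [hσeven x.2.1 hx1]
      simp [ssign] at hbswap hbras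
      refine Prod.ext ?_ (Prod.ext ?_ ?_)
      · simp [hx2, e3, ssign]
        linear_combination hbswap
      · simp [hx2, ssign, hbras]
        module
      · simp
    · obtain ⟨hx0, -⟩ := (memT x).1 hx
      obtain ⟨-, hy2⟩ := (memF y).1 hy
      have e3 : ωA a₀ y.2.1 = 0 := hOdd false a₀ ha₀even y.2.1 hy1
      rw [hσeven y.2.1 hy1]
      simp [ssign] at hbswap hbras
      refine Prod.ext ?_ (Prod.ext ?_ ?_)
      · simp [hy2, e3, ssign]
        linear_combination hbswap
      · simp [hy2, ssign, hbras]
        module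
      · simp
    · obtain ⟨hx0, -⟩ := (memT x).1 hx
      obtain ⟨hy0, -⟩ := (memT y).1 hy
      rw [hσodd x.2.1 hx1, hσodd y.2.1 hy1, hDneg, hDneg]
      simp [ssign] at hbswap hbras
      refine Prod.ext ?_ (Prod.ext ?_ ?_)
      · simp [ssign]
        linear_combination hbswap
      · simp [ssign, hbras]
        module
      · simp
  · -- jacobi
    intro i j k x hx y hy z hz
    have hx1 : x.2.1 ∈ subA i := by
      cases i
      · exact ((memF x).1 hx).1
      · exact ((memT x).1 hx).2
    have hy1 : y.2.1 ∈ subA j := by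
      cases j
      · exact ((memF y).1 hy).1
      · exact ((memT y).1 hy).2
    have hz1 : z.2.1 ∈ subA k := by
      cases k
      · exact ((memF z).1 hz).1
      · exact ((memT z).1 hz).2
    rw [← hJg (ssign K i k) (ssign K j i) (ssign K k j) x y z]
    rw [Jexp1 (ssign K i k) (ssign K j i) (ssign K k j) x y z]
    rw [Jexp2 (ssign K i k) (ssign K j i) (ssign K k j) (0, x.2.1, 0) y z,
      Jexp2 (ssign K i k) (ssign K j i) (ssign K k j) ((0:K), (0:A), (1:K)) y z]
    rw [Jexp3 (ssign K i k) (ssign K j i) (ssign K k j) (0, x.2.1, 0) (0, y.2.1, 0) z,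
      Jexp3 (ssign K i k) (ssign K j i) (ssign K k j) (0, x.2.1, 0)
        ((0:K), (0:A), (1:K)) z,
      Jexp3 (ssign K i k) (ssign K j i) (ssign K k j) ((0:K), (0:A), (1:K))
        (0, y.2.1, 0) z,
      Jexp3 (ssign K i k) (ssign K j i) (ssign K k j) ((0:K), (0:A), (1:K))
        ((0:K), (0:A), (1:K)) z]
    have GA := jacA i j k x.2.1 hx1 y.2.1 hy1 z.2.1 hz1
    rw [GA]
    cases i <;> cases j <;> cases k
    · rw [((memF x).1 hx).2, ((memF y).1 hy).2, ((memF z).1 hz).2]; simp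
    · rw [((memF x).1 hx).2, ((memF y).1 hy).2,
        jacABE false false x.2.1 hx1 y.2.1 hy1]
      simp
    · rw [((memF x).1 hx).2, ((memF z).1 hz).2]
      have h2 : Jg (ssign K false false) (ssign K true false) (ssign K false true)
          (0, x.2.1, 0) ((0:K), (0:A), (1:K)) (0, z.2.1, 0) = 0 := by
        rw [Jcyc, Jcyc]
        exact jacABE false false z.2.1 hz1 x.2.1 hx1
      rw [h2]; simp
    · rw [((memF x).1 hx).2]
      have h2 : Jg (ssign K false true) (ssign K true false) (ssign K true true)
          (0, x.2.1, 0) ((0:K), (0:A), (1:K)) (0, z.2.1, 0) = 0 := by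
        rw [Jcyc, Jcyc]
        exact jacABE true false z.2.1 hz1 x.2.1 hx1
      rw [h2, jacABE false true x.2.1 hx1 y.2.1 hy1,
        jacAEE false x.2.1 hx1]
      simp
    · rw [((memF y).1 hy).2, ((memF z).1 hz).2]
      have h2 : Jg (ssign K true false) (ssign K false true) (ssign K false false)
          ((0:K), (0:A), (1:K)) (0, y.2.1, 0) (0, z.2.1, 0) = 0 := by
        rw [Jcyc]
        exact jacABE false false y.2.1 hy1 z.2.1 hz1
      rw [h2]; simp
    · rw [((memF y).1 hy).2]
      have h2 : Jg (ssign K true true) (ssign K false true) (ssign K true false)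
          ((0:K), (0:A), (1:K)) (0, y.2.1, 0) (0, z.2.1, 0) = 0 := by
        rw [Jcyc]
        exact jacABE false true y.2.1 hy1 z.2.1 hz1
      have h3 : Jg (ssign K true true) (ssign K false true) (ssign K true false)
          ((0:K), (0:A), (1:K)) (0, y.2.1, 0) ((0:K), (0:A), (1:K)) = 0 := by
        rw [Jcyc]
        exact jacAEE false y.2.1 hy1
      rw [h2, h3, jacABE true false x.2.1 hx1 y.2.1 hy1]
      simp
    · rw [((memF z).1 hz).2]
      have h2 : Jg (ssign K true false) (ssign K true true) (ssign K false true)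
          (0, x.2.1, 0) ((0:K), (0:A), (1:K)) (0, z.2.1, 0) = 0 := by
        rw [Jcyc, Jcyc]
        exact jacABE false true z.2.1 hz1 x.2.1 hx1
      have h3 : Jg (ssign K true false) (ssign K true true) (ssign K false true)
          ((0:K), (0:A), (1:K)) ((0:K), (0:A), (1:K)) (0, z.2.1, 0) = 0 := by
        rw [Jcyc, Jcyc]
        exact jacAEE false z.2.1 hz1
      have h4 : Jg (ssign K true false) (ssign K true true) (ssign K false true)
          ((0:K), (0:A), (1:K)) (0, y.2.1, 0) (0, z.2.1, 0) = 0 := by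
        rw [Jcyc]
        exact jacABE true false y.2.1 hy1 z.2.1 hz1
      rw [h2, h3, h4]
      simp
    · have h2 : Jg (ssign K true true) (ssign K true true) (ssign K true true)
          (0, x.2.1, 0) ((0:K), (0:A), (1:K)) (0, z.2.1, 0) = 0 := by
        rw [Jcyc, Jcyc]
        exact jacABE true true z.2.1 hz1 x.2.1 hx1
      have h3 : Jg (ssign K true true) (ssign K true true) (ssign K true true)
          ((0:K), (0:A), (1:K)) ((0:K), (0:A), (1:K)) (0, z.2.1, 0) = 0 := by
        rw [Jcyc, Jcyc]
        exact jacAEE true z.2.1 hz1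
      have h4 : Jg (ssign K true true) (ssign K true true) (ssign K true true)
          ((0:K), (0:A), (1:K)) (0, y.2.1, 0) (0, z.2.1, 0) = 0 := by
        rw [Jcyc]
        exact jacABE true true y.2.1 hy1 z.2.1 hz1
      have h5 : Jg (ssign K true true) (ssign K true true) (ssign K true true)
          ((0:K), (0:A), (1:K)) (0, y.2.1, 0) ((0:K), (0:A), (1:K)) = 0 := by
        rw [Jcyc]
        exact jacAEE true y.2.1 hy1
      rw [h2, h3, h4, h5, jacABE true true x.2.1 hx1 y.2.1 hy1,
        jacAEE true x.2.1 hx1, jacEEE]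
      simp
  · -- jacobi3
    intro h3 f hf
    obtain ⟨hf0, hf1⟩ := (memT f).1 hf
    have key : brG f f =
        (ωA (D f.2.1 + Ds f.2.1) f.2.1 + f.2.2 * ωA a₀ f.2.1 + f.2.2 * ωA a₀ f.2.1,
         brA f.2.1 f.2.1 + (2 * f.2.2) • D f.2.1 + (2 * (f.2.2 * f.2.2)) • a₀, 0) := by
      rw [hbrG]
      refine Prod.ext rfl (Prod.ext ?_ rfl)
      rw [hσodd f.2.1 hf1, hDneg]
      module
    rw [key, hbrG]
    have r1 : brA (D f.2.1) f.2.1 = -brA f.2.1 (D f.2.1) := by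
      have := hLie.antisymm true false f.2.1 hf1 (D f.2.1) (hDodd true f.2.1 hf1)
      simpa [ssign] using this
    have r2 : brA f.2.1 a₀ = -brA a₀ f.2.1 := by
      have := hLie.antisymm false true a₀ ha₀even f.2.1 hf1
      simpa [ssign] using this
    have jc3 : brA f.2.1 (brA f.2.1 f.2.1) = 0 := hLie.jacobi3 h3 f.2.1 hf1
    have hder := hDder true f.2.1 hf1 f.2.1
    have hDM : D (brA f.2.1 f.2.1 + (2 * f.2.2) • D f.2.1 + (2 * (f.2.2 * f.2.2)) • a₀)
        = -((2:K) • brA f.2.1 (D f.2.1)) + (2 * f.2.2) • brA a₀ f.2.1 := by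
      rw [hDadd, hDadd, hDsmul, hDsmul, hDD, hDa₀, hder, r1]
      simp [ssign]
      module
    refine Prod.ext ?_ (Prod.ext ?_ ?_)
    · -- scalar component
      simp only [Prod.mk.injEq, Prod.fst_zero]
      rw [keyβ true f.2.1 hf1, hDM]
      have z1 : ωA (D f.2.1) (D f.2.1) = 0 :=
        hOdd false _ (by simpa using hDodd true f.2.1 hf1)
          _ (by simpa using hDodd true f.2.1 hf1)
      have z2 : ωA (D f.2.1) a₀ = 0 := hωDa₀ true f.2.1 hf1
      have z3 : ωA f.2.1 (brA a₀ f.2.1) = 0 := hOdd true f.2.1 hf1 _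
        (by simpa using hLie.graded false true a₀ ha₀even f.2.1 hf1)
      have z4 : ωA a₀ (D f.2.1) = 0 := hωa₀D true f.2.1 hf1
      have z6 : ωA a₀ (brA f.2.1 f.2.1) = 0 := by
        rw [← hΩ, hωsubl]
        have u1 : ωA (D (D f.2.1)) f.2.1 = 0 := hOdd true _
          (by simpa using hDodd false (D f.2.1) (hDodd true f.2.1 hf1)) _ hf1
        have u2 : ωA (Ds (Ds f.2.1)) f.2.1 = 0 := hOdd true _
          (by simpa using hDspar false (Ds f.2.1) (hDspar true f.2.1 hf1)) _ hf1
        rw [u1, u2]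
        ring
      have c1 : ωA (D f.2.1) (brA f.2.1 f.2.1) + 2 * ωA f.2.1 (brA f.2.1 (D f.2.1))
          = 0 := by
        have hc := hclosed false true true (D f.2.1) (by simpa using hDodd true f.2.1 hf1)
          f.2.1 hf1 f.2.1 hf1
        rw [r1, hωnegr] at hc
        simp [ssign] at hc
        linear_combination hc
      simp only [ωaddr, ωsmulr, hωnegr, smul_eq_mul]
      have sst : ssign K true true = (-1 : K) := by simp [ssign]
      rw [sst]
      linear_combination c1 + (2*f.2.2)*z1 + (2*f.2.2*f.2.2)*z2 - (2*f.2.2)*z3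
        + f.2.2*z6 + (2*f.2.2*f.2.2)*z4 + (2*f.2.2*f.2.2*f.2.2)*hωa₀a₀
    · -- middle component
      simp only [Prod.mk.injEq, Prod.snd_zero, Prod.fst_zero]
      rw [hDM, braddr, braddr, brsmulr, brsmulr, jc3, r2]
      simp only [hσodd f.2.1 hf1, hDneg]
      module
    · rfl
  · -- [x, g] = 0
    intro g
    rw [hbrG]
    simp [hD0, hDs0, hσ0, hω0l, hω0r, hbr0l, Prod.ext_iff]
  · -- bracket on A
    intro i a ha b
    rw [hbrG]
    simp only []
    rw [keyβ i a ha b]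
    simp [hω0l, hω0r, Prod.ext_iff]
  · -- [e,e]
    rw [hbrG]
    simp [hD0, hDs0, hσ0, hω0l, hω0r, hbr0r, Prod.ext_iff]
  · -- [e,a]
    intro a
    rw [hbrG]
    simp [hD0, hDs0, hσ0, hω0l, hω0r, hbr0l, Prod.ext_iff]
  · -- form bilinearity
    refine ⟨?_, ?_, ?_, ?_⟩
    · intro x y z; simp [dblFormMinus, ωaddl]; ring
    · intro c x y; simp [dblFormMinus, ωsmull, smul_eq_mul]; ring
    · intro x y z; simp [dblFormMinus, ωaddr]; ring
    · intro c x y; simp [dblFormMinus, ωsmulr, smul_eq_mul]; ring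
  · -- form skew
    intro i j x hx y hy
    cases i <;> cases j
    · obtain ⟨hx1, hx2⟩ := (memF x).1 hx
      obtain ⟨hy1, hy2⟩ := (memF y).1 hy
      simp [dblFormMinus, ssign, hx2, hy2, hOdd false x.2.1 hx1 y.2.1 hy1,
        hOdd false y.2.1 hy1 x.2.1 hx1]
    · obtain ⟨hx1, hx2⟩ := (memF x).1 hx
      obtain ⟨hy1, hy2⟩ := (memT y).1 hy
      have := hflip false x.2.1 hx1 y.2.1 (by simpa using hy2)
      simp [dblFormMinus, ssign, hx2, hy1, this]
      ring
    · obtain ⟨hx1, hx2⟩ := (memT x).1 hx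
      obtain ⟨hy1, hy2⟩ := (memF y).1 hy
      have := hflip true x.2.1 hx2 y.2.1 (by simpa using hy1)
      simp [dblFormMinus, ssign, hx1, hy2, this]
      ring
    · obtain ⟨hx1, hx2⟩ := (memT x).1 hx
      obtain ⟨hy1, hy2⟩ := (memT y).1 hy
      simp [dblFormMinus, ssign, hx1, hy1, hOdd true x.2.1 hx2 y.2.1 hy2,
        hOdd true y.2.1 hy2 x.2.1 hx2]
  · -- closedness for the form
    intro i j k x hx y hy z hz
    have hx1 : x.2.1 ∈ subA i := by
      cases i
      · exact ((memF x).1 hx).1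
      · exact ((memT x).1 hx).2
    have hy1 : y.2.1 ∈ subA j := by
      cases j
      · exact ((memF y).1 hy).1
      · exact ((memT y).1 hy).2
    have hz1 : z.2.1 ∈ subA k := by
      cases k
      · exact ((memF z).1 hz).1
      · exact ((memT z).1 hz).2
    rw [← hCg (ssign K i k) (ssign K k j) (ssign K j i) x y z]
    rw [Cexp1 (ssign K i k) (ssign K k j) (ssign K j i) x y z]
    rw [Cexp2 (ssign K i k) (ssign K k j) (ssign K j i) (0, x.2.1, 0) y z,
      Cexp2 (ssign K i k) (ssign K k j) (ssign K j i) ((0:K), (0:A), (1:K)) y z]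
    rw [Cexp3 (ssign K i k) (ssign K k j) (ssign K j i) (0, x.2.1, 0) (0, y.2.1, 0) z,
      Cexp3 (ssign K i k) (ssign K k j) (ssign K j i) (0, x.2.1, 0)
        ((0:K), (0:A), (1:K)) z,
      Cexp3 (ssign K i k) (ssign K k j) (ssign K j i) ((0:K), (0:A), (1:K))
        (0, y.2.1, 0) z,
      Cexp3 (ssign K i k) (ssign K k j) (ssign K j i) ((0:K), (0:A), (1:K))
        ((0:K), (0:A), (1:K)) z]
    rw [clA i j k x.2.1 hx1 y.2.1 hy1 z.2.1 hz1]
    cases i <;> cases j <;> cases k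
    · rw [((memF x).1 hx).2, ((memF y).1 hy).2, ((memF z).1 hz).2]; ring
    · rw [((memF x).1 hx).2, ((memF y).1 hy).2,
        clABE false false x.2.1 hx1 y.2.1 hy1]
      ring
    · rw [((memF x).1 hx).2, ((memF z).1 hz).2]
      have h2 : Cg (ssign K false false) (ssign K false true) (ssign K true false)
          (0, x.2.1, 0) ((0:K), (0:A), (1:K)) (0, z.2.1, 0) = 0 := by
        rw [Ccyc, Ccyc]
        exact clABE false false z.2.1 hz1 x.2.1 hx1
      rw [h2]; ring
    · rw [((memF x).1 hx).2]
      have h2 : Cg (ssign K false true) (ssign K true true) (ssign K true false)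
          (0, x.2.1, 0) ((0:K), (0:A), (1:K)) (0, z.2.1, 0) = 0 := by
        rw [Ccyc, Ccyc]
        exact clABE true false z.2.1 hz1 x.2.1 hx1
      rw [h2, clABE false true x.2.1 hx1 y.2.1 hy1, clAEE false x.2.1 hx1]
      ring
    · rw [((memF y).1 hy).2, ((memF z).1 hz).2]
      have h2 : Cg (ssign K true false) (ssign K false false) (ssign K false true)
          ((0:K), (0:A), (1:K)) (0, y.2.1, 0) (0, z.2.1, 0) = 0 := by
        rw [Ccyc]
        exact clABE false false y.2.1 hy1 z.2.1 hz1
      rw [h2]; ring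
    · rw [((memF y).1 hy).2]
      have h2 : Cg (ssign K true true) (ssign K true false) (ssign K false true)
          ((0:K), (0:A), (1:K)) (0, y.2.1, 0) (0, z.2.1, 0) = 0 := by
        rw [Ccyc]
        exact clABE false true y.2.1 hy1 z.2.1 hz1
      have h3 : Cg (ssign K true true) (ssign K true false) (ssign K false true)
          ((0:K), (0:A), (1:K)) (0, y.2.1, 0) ((0:K), (0:A), (1:K)) = 0 := by
        rw [Ccyc]
        exact clAEE false y.2.1 hy1
      rw [h2, h3, clABE true false x.2.1 hx1 y.2.1 hy1]
      ring
    · rw [((memF z).1 hz).2]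
      have h2 : Cg (ssign K true false) (ssign K false true) (ssign K true true)
          (0, x.2.1, 0) ((0:K), (0:A), (1:K)) (0, z.2.1, 0) = 0 := by
        rw [Ccyc, Ccyc]
        exact clABE false true z.2.1 hz1 x.2.1 hx1
      have h3 : Cg (ssign K true false) (ssign K false true) (ssign K true true)
          ((0:K), (0:A), (1:K)) ((0:K), (0:A), (1:K)) (0, z.2.1, 0) = 0 := by
        rw [Ccyc, Ccyc]
        exact clAEE false z.2.1 hz1
      have h4 : Cg (ssign K true false) (ssign K false true) (ssign K true true)
          ((0:K), (0:A), (1:K)) (0, y.2.1, 0) (0, z.2.1, 0) = 0 := by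
        rw [Ccyc]
        exact clABE true false y.2.1 hy1 z.2.1 hz1
      rw [h2, h3, h4]
      ring
    · have h2 : Cg (ssign K true true) (ssign K true true) (ssign K true true)
          (0, x.2.1, 0) ((0:K), (0:A), (1:K)) (0, z.2.1, 0) = 0 := by
        rw [Ccyc, Ccyc]
        exact clABE true true z.2.1 hz1 x.2.1 hx1
      have h3 : Cg (ssign K true true) (ssign K true true) (ssign K true true)
          ((0:K), (0:A), (1:K)) ((0:K), (0:A), (1:K)) (0, z.2.1, 0) = 0 := by
        rw [Ccyc, Ccyc]
        exact clAEE true z.2.1 hz1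
      have h4 : Cg (ssign K true true) (ssign K true true) (ssign K true true)
          ((0:K), (0:A), (1:K)) (0, y.2.1, 0) (0, z.2.1, 0) = 0 := by
        rw [Ccyc]
        exact clABE true true y.2.1 hy1 z.2.1 hz1
      have h5 : Cg (ssign K true true) (ssign K true true) (ssign K true true)
          ((0:K), (0:A), (1:K)) (0, y.2.1, 0) ((0:K), (0:A), (1:K)) = 0 := by
        rw [Ccyc]
        exact clAEE true y.2.1 hy1
      rw [h2, h3, h4, h5, clABE true true x.2.1 hx1 y.2.1 hy1,
        clAEE true x.2.1 hx1, clEEE]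
      ring
  · -- nondegeneracy
    intro p hp
    have h1 : p.2.1 = 0 := by
      apply hnondeg
      intro y
      have := hp (0, y, 0)
      simpa [dblFormMinus] using this
    have h2 : p.2.2 = 0 := by
      have := hp (1, 0, 0)
      simpa [dblFormMinus, hω0r] using this
    have h3 : p.1 = 0 := by
      have := hp (0, 0, 1)
      simp [dblFormMinus, hω0r] at this
      linear_combination this
    exact Prod.ext h3 (Prod.ext h1 h2)
  · -- odd form
    intro i x hx y hy
    cases i
    · obtain ⟨hx1, hx2⟩ := (memF x).1 hx
      obtain ⟨hy1, hy2⟩ := (memF y).1 hy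
      simp [dblFormMinus, hx2, hy2, hOdd false x.2.1 hx1 y.2.1 hy1]
    · obtain ⟨hx1, hx2⟩ := (memT x).1 hx
      obtain ⟨hy1, hy2⟩ := (memT y).1 hy
      simp [dblFormMinus, hx1, hy1, hOdd true x.2.1 hx2 y.2.1 hy2]
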